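/- Let 0 < s < t, and let Z₁ and Y be independent real random variables with Z₁ distributed as a centered Gaussian with variance s and Y as a centered Gaussian with variance t−s (equivalently, (Z₁, Z₁+Y) has the law of a Brownian motion at times s and t). Then for all x, y ∈ ℝ, P(Z₁ ≤ x, Z₁ + Y ≤ y) = ψ(s,t; Φ(x/√s), Φ(y/√t)); that is, ψ(s,t;·,·) is the copula of the bivariate distribution of the Brownian motion at times s < t. -/

import Mathlib

open MeasureTheory Set Filter

/-- Density of the standard normal distribution (φ). -/
noncomputable def stdNormalPDF (x : ℝ) : ℝ := (Real.sqrt (2 * Real.pi))⁻¹ * Real.exp (-x ^ 2 / 2)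

/-- Cumulative distribution function of the standard normal distribution (Φ). -/
noncomputable def stdNormalCDF (x : ℝ) : ℝ := ∫ t in Set.Iic x, stdNormalPDF t

/-- The standard normal quantile function (Φ⁻¹), the inverse of Φ on (0,1). -/
noncomputable def stdNormalCDFInv : ℝ → ℝ := Function.invFun stdNormalCDF

/-- The integrand of the Brownian-copula kernel; the `if` branches encode the
conventions Φ⁻¹(0) = -∞ (so Φ(·) = 0) and Φ⁻¹(1) = +∞ (so Φ(·) = 1). -/
noncomputable def psiIntegrand (s t v w : ℝ) : ℝ :=
  if v ≤ 0 then 0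
  else if 1 ≤ v then 1
  else stdNormalCDF ((Real.sqrt (max s t) * stdNormalCDFInv v -
      Real.sqrt (min s t) * stdNormalCDFInv w) / Real.sqrt |t - s|)

/-- The Brownian-copula kernel ψ(s,t;u,v). -/
noncomputable def psi (s t u v : ℝ) : ℝ :=
  if 0 < |t - s| then ∫ w in (0:ℝ)..u, psiIntegrand s t v w
  else if 0 < t then min u v
  else u * v

open ProbabilityTheory

lemma stdNormalPDF_eq (x : ℝ) : stdNormalPDF x = gaussianPDFReal 0 1 x := by
  simp [stdNormalPDF, gaussianPDFReal]

lemma stdNormalPDF_pos (x : ℝ) : 0 < stdNormalPDF x := by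
  rw [stdNormalPDF_eq]; exact gaussianPDFReal_pos 0 1 x one_ne_zero

lemma stdNormalPDF_integrable : Integrable stdNormalPDF := by
  have h := integrable_gaussianPDFReal 0 1
  exact h.congr (Filter.Eventually.of_forall fun x => (stdNormalPDF_eq x).symm)

lemma stdNormalPDF_continuous : Continuous stdNormalPDF := by
  unfold stdNormalPDF
  continuity

lemma stdNormalPDF_integral : ∫ x, stdNormalPDF x = 1 := by
  rw [integral_congr_ae (Filter.Eventually.of_forall stdNormalPDF_eq)]
  exact integral_gaussianPDFReal_eq_one 0 one_ne_zero

lemma gaussianReal_one_Iic (b : ℝ) :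
    gaussianReal 0 1 (Iic b) = ENNReal.ofReal (stdNormalCDF b) := by
  rw [gaussianReal_apply_eq_integral 0 one_ne_zero]
  congr 1
  exact (setIntegral_congr_fun measurableSet_Iic fun x _ => stdNormalPDF_eq x).symm

lemma stdNormalCDF_nonneg (b : ℝ) : 0 ≤ stdNormalCDF b :=
  setIntegral_nonneg measurableSet_Iic fun x _ => (stdNormalPDF_pos x).le

lemma stdNormalCDF_pos (b : ℝ) : 0 < stdNormalCDF b := by
  rw [stdNormalCDF]
  rw [setIntegral_pos_iff_support_of_nonneg_ae
    (Filter.Eventually.of_forall fun x => (stdNormalPDF_pos x).le)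
    stdNormalPDF_integrable.restrict]
  have : Function.support stdNormalPDF = Set.univ := by
    ext x; simp [Function.mem_support, (stdNormalPDF_pos x).ne']
  rw [this, Set.univ_inter]
  simp

lemma stdNormalCDF_strictMono : StrictMono stdNormalCDF := by
  intro a b hab
  have h1 : IntegrableOn stdNormalPDF (Iic a) := stdNormalPDF_integrable.restrict
  have h2 : IntegrableOn stdNormalPDF (Iic b) := stdNormalPDF_integrable.restrict
  have key := intervalIntegral.integral_Iic_sub_Iic h1 h2
  have hpos : 0 < ∫ x in a..b, stdNormalPDF x := by
    apply intervalIntegral.intervalIntegral_pos_of_pos_on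
    · exact stdNormalPDF_integrable.intervalIntegrable
    · exact fun x _ => stdNormalPDF_pos x
    · exact hab
  rw [show stdNormalCDF a = ∫ x in Iic a, stdNormalPDF x from rfl,
    show stdNormalCDF b = ∫ x in Iic b, stdNormalPDF x from rfl] at *
  linarith

lemma stdNormalCDF_lt_one (b : ℝ) : stdNormalCDF b < 1 := by
  have hcompl : (∫ x in Iic b, stdNormalPDF x) + ∫ x in (Iic b)ᶜ, stdNormalPDF x
      = ∫ x, stdNormalPDF x :=
    integral_add_compl measurableSet_Iic stdNormalPDF_integrable
  rw [stdNormalPDF_integral] at hcompl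
  have hpos : 0 < ∫ x in (Iic b)ᶜ, stdNormalPDF x := by
    rw [setIntegral_pos_iff_support_of_nonneg_ae
      (Filter.Eventually.of_forall fun x => (stdNormalPDF_pos x).le)
      stdNormalPDF_integrable.restrict]
    have : Function.support stdNormalPDF = Set.univ := by
      ext x; simp [Function.mem_support, (stdNormalPDF_pos x).ne']
    rw [this, Set.univ_inter, Set.compl_Iic]
    simp
  rw [stdNormalCDF]
  linarith

lemma stdNormalCDF_hasDerivAt (u : ℝ) : HasDerivAt stdNormalCDF (stdNormalPDF u) u := by
  have key : ∀ z : ℝ, stdNormalCDF z = stdNormalCDF 0 + ∫ x in (0:ℝ)..z, stdNormalPDF x := by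
    intro z
    have := intervalIntegral.integral_Iic_sub_Iic
      (stdNormalPDF_integrable.restrict (s := Iic (0:ℝ)))
      (stdNormalPDF_integrable.restrict (s := Iic z))
    rw [stdNormalCDF, stdNormalCDF]
    linarith [this]
  have hD : HasDerivAt (fun z => stdNormalCDF 0 + ∫ x in (0:ℝ)..z, stdNormalPDF x)
      (stdNormalPDF u) u := by
    apply HasDerivAt.const_add
    exact intervalIntegral.integral_hasDerivAt_right
      stdNormalPDF_integrable.intervalIntegrable
      stdNormalPDF_continuous.aestronglyMeasurable.stronglyMeasurableAtFilter
      stdNormalPDF_continuous.continuousAt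
  exact hD.congr_of_eventuallyEq (Filter.Eventually.of_forall key)

lemma stdNormalCDF_continuous : Continuous stdNormalCDF :=
  continuous_iff_continuousAt.mpr fun u => (stdNormalCDF_hasDerivAt u).continuousAt

lemma stdNormalCDF_tendsto_atBot : Tendsto stdNormalCDF atBot (nhds 0) := by
  have heq : ∀ b : ℝ, stdNormalCDF b = (gaussianReal 0 1 (Iic b)).toReal := by
    intro b
    rw [gaussianReal_one_Iic, ENNReal.toReal_ofReal (stdNormalCDF_nonneg b)]
  have hmeas : Tendsto (fun b : ℝ => gaussianReal 0 1 (Iic b)) atBot (nhds 0) := by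
    have h := tendsto_measure_iInter_atBot (μ := gaussianReal 0 1) (s := fun b : ℝ => Iic b)
      (fun b => measurableSet_Iic.nullMeasurableSet) (fun a b hab => Iic_subset_Iic.mpr hab)
      ⟨0, measure_ne_top _ _⟩
    have : ⋂ b : ℝ, Iic b = ∅ := by
      ext z; simp only [mem_iInter, mem_Iic, mem_empty_iff_false, iff_false, not_forall, not_le]
      exact ⟨z - 1, by linarith⟩
    rwa [this, measure_empty] at h
  have := (ENNReal.tendsto_toReal (by simp)).comp hmeas
  simp only [ENNReal.toReal_zero] at this
  exact Tendsto.congr (fun b => (heq b).symm) this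

lemma stdNormalCDFInv_comp (u : ℝ) : stdNormalCDFInv (stdNormalCDF u) = u :=
  Function.leftInverse_invFun stdNormalCDF_strictMono.injective u

lemma stdNormalCDF_image_Iic (c : ℝ) :
    stdNormalCDF '' Iic c = Ioc 0 (stdNormalCDF c) := by
  apply Set.Subset.antisymm
  · rintro w ⟨u, hu, rfl⟩
    exact ⟨stdNormalCDF_pos u, stdNormalCDF_strictMono.monotone hu⟩
  · rintro w ⟨hw0, hwc⟩
    obtain ⟨a, ha, haw⟩ : ∃ a, a ≤ c ∧ stdNormalCDF a < w := by
      have hev : ∀ᶠ a in atBot, stdNormalCDF a < w :=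
        stdNormalCDF_tendsto_atBot.eventually_lt_const hw0
      obtain ⟨a0, ha0⟩ := (hev.and (eventually_le_atBot c)).exists
      exact ⟨a0, ha0.2, ha0.1⟩
    have : w ∈ stdNormalCDF '' Icc a c :=
      intermediate_value_Icc ha stdNormalCDF_continuous.continuousOn ⟨haw.le, hwc⟩
    exact Set.image_mono Icc_subset_Iic_self this

lemma gaussianReal_Iic (v : ℝ) (hv : 0 < v) (a : ℝ) :
    gaussianReal 0 v.toNNReal (Iic a) = ENNReal.ofReal (stdNormalCDF (a / Real.sqrt v)) := by
  have hsv : 0 < Real.sqrt v := Real.sqrt_pos.mpr hv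
  have hmap : (gaussianReal 0 1).map (Real.sqrt v * ·) = gaussianReal 0 v.toNNReal := by
    rw [gaussianReal_map_const_mul]
    congr 1
    · ring
    · ext
      simp [Real.sq_sqrt hv.le, hv.le]
  rw [← hmap, Measure.map_apply (measurable_const_mul _) measurableSet_Iic]
  have hpre : (Real.sqrt v * ·) ⁻¹' Iic a = Iic (a / Real.sqrt v) := by
    ext z
    simp only [mem_preimage, mem_Iic]
    rw [← le_div_iff₀' hsv]
  rw [hpre, gaussianReal_one_Iic]

lemma gaussianReal_eq_map (v : ℝ) (hv : 0 < v) :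
    (gaussianReal 0 1).map (Real.sqrt v * ·) = gaussianReal 0 v.toNNReal := by
  rw [gaussianReal_map_const_mul]
  congr 1
  · ring
  · ext
    simp [Real.sq_sqrt hv.le, hv.le]


/-- ψ(s,t;·,·) is the copula of the bivariate distribution of Brownian motion at times
0 < s < t: if Z ~ N(0,s) and Y ~ N(0,t−s) are independent, then
P(Z ≤ x, Z + Y ≤ y) = ψ(s,t; Φ(x/√s), Φ(y/√t)). -/
theorem psi_is_copula_of_brownian_pair
    {Ω : Type*} [MeasurableSpace Ω] (P : Measure Ω) [IsProbabilityMeasure P]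
    (s t : ℝ) (hs : 0 < s) (hst : s < t)
    (Z Y : Ω → ℝ) (hZm : Measurable Z) (hYm : Measurable Y)
    (hZ : P.map Z = gaussianReal 0 s.toNNReal)
    (hY : P.map Y = gaussianReal 0 (t - s).toNNReal)
    (hindep : IndepFun Z Y P) (x y : ℝ) :
    (P {ω | Z ω ≤ x ∧ Z ω + Y ω ≤ y}).toReal =
      psi s t (stdNormalCDF (x / Real.sqrt s)) (stdNormalCDF (y / Real.sqrt t)) := by
  have hts : 0 < t - s := sub_pos.mpr hst
  have ht : 0 < t := hs.trans hst
  have hsqs : 0 < Real.sqrt s := Real.sqrt_pos.mpr hs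
  have hsqt : 0 < Real.sqrt t := Real.sqrt_pos.mpr ht
  set c := x / Real.sqrt s with hc
  set G : ℝ → ℝ := fun z => stdNormalCDF ((y - z) / Real.sqrt (t - s)) with hG
  have hGcont : Continuous G := stdNormalCDF_continuous.comp (by fun_prop)
  have hGnn : ∀ z, 0 ≤ G z := fun z => (stdNormalCDF_pos _).le
  have hGle : ∀ z, G z ≤ 1 := fun z => (stdNormalCDF_lt_one _).le
  have hS : MeasurableSet {p : ℝ × ℝ | p.1 ≤ x ∧ p.1 + p.2 ≤ y} :=
    (measurableSet_le measurable_fst measurable_const).inter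
      (measurableSet_le (measurable_fst.add measurable_snd) measurable_const)
  -- Step A: reduce to product measure
  have hmapZY : P.map (fun ω => (Z ω, Y ω)) = (P.map Z).prod (P.map Y) :=
    (ProbabilityTheory.indepFun_iff_map_prod_eq_prod_map_map hZm.aemeasurable
      hYm.aemeasurable).mp hindep
  have hPeq : P {ω | Z ω ≤ x ∧ Z ω + Y ω ≤ y}
      = ((gaussianReal 0 s.toNNReal).prod (gaussianReal 0 (t - s).toNNReal))
          {p : ℝ × ℝ | p.1 ≤ x ∧ p.1 + p.2 ≤ y} := by
    rw [← hZ, ← hY, ← hmapZY, Measure.map_apply (hZm.prodMk hYm) hS]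
    rfl
  -- Step B: Fubini, inner measure computed
  have hprod : ((gaussianReal 0 s.toNNReal).prod (gaussianReal 0 (t - s).toNNReal))
      {p : ℝ × ℝ | p.1 ≤ x ∧ p.1 + p.2 ≤ y}
      = ∫⁻ z in Iic x, ENNReal.ofReal (G z) ∂(gaussianReal 0 s.toNNReal) := by
    rw [Measure.prod_apply hS, ← lintegral_indicator measurableSet_Iic]
    congr 1
    ext z
    by_cases hz : z ≤ x
    · have hpre : (Prod.mk z ⁻¹' {p : ℝ × ℝ | p.1 ≤ x ∧ p.1 + p.2 ≤ y}) = Iic (y - z) := by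
        ext w
        simp only [mem_preimage, mem_setOf_eq, mem_Iic, hz, true_and]
        constructor <;> intro h <;> linarith
      rw [hpre, Set.indicator_of_mem (show z ∈ Iic x from hz), gaussianReal_Iic (t - s) hts (y - z)]
    · have hpre : (Prod.mk z ⁻¹' {p : ℝ × ℝ | p.1 ≤ x ∧ p.1 + p.2 ≤ y}) = ∅ := by
        ext w; simp [hz]
      rw [hpre, Set.indicator_of_notMem (show z ∉ Iic x from hz), measure_empty]
  -- Step C: change of measure to standard normal
  have hGm : Measurable fun z => ENNReal.ofReal (G z) :=
    ENNReal.measurable_ofReal.comp hGcont.measurable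
  have hlin : ∫⁻ z in Iic x, ENNReal.ofReal (G z) ∂(gaussianReal 0 s.toNNReal)
      = ∫⁻ u in Iic c, ENNReal.ofReal (G (Real.sqrt s * u)) ∂(gaussianReal 0 1) := by
    rw [← gaussianReal_eq_map s hs,
      Measure.restrict_map (measurable_const_mul _) measurableSet_Iic,
      lintegral_map hGm (measurable_const_mul _)]
    have hpre : (Real.sqrt s * ·) ⁻¹' Iic x = Iic c := by
      ext z
      simp only [mem_preimage, mem_Iic]
      rw [← le_div_iff₀' hsqs]
    rw [hpre]
  -- Step D: withDensity to Lebesgue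
  have hKint : IntegrableOn (fun u => stdNormalPDF u * G (Real.sqrt s * u)) (Iic c) := by
    apply Integrable.mono (stdNormalPDF_integrable.restrict (s := Iic c))
    · exact (stdNormalPDF_continuous.mul (hGcont.comp (by fun_prop))).aestronglyMeasurable
    · refine Filter.Eventually.of_forall fun u => ?_
      rw [Real.norm_eq_abs, Real.norm_eq_abs, abs_of_nonneg (stdNormalPDF_pos u).le,
        abs_of_nonneg (mul_nonneg (stdNormalPDF_pos u).le (hGnn _))]
      nth_rewrite 2 [← mul_one (stdNormalPDF u)]
      exact mul_le_mul_of_nonneg_left (hGle _) (stdNormalPDF_pos u).le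
  have hdens : ∫⁻ u in Iic c, ENNReal.ofReal (G (Real.sqrt s * u)) ∂(gaussianReal 0 1)
      = ENNReal.ofReal (∫ u in Iic c, stdNormalPDF u * G (Real.sqrt s * u)) := by
    have hGm2 : Measurable fun u : ℝ => ENNReal.ofReal (G (Real.sqrt s * u)) :=
      hGm.comp (measurable_const_mul _)
    rw [gaussianReal_of_var_ne_zero 0 one_ne_zero,
      restrict_withDensity measurableSet_Iic,
      lintegral_withDensity_eq_lintegral_mul _ (measurable_gaussianPDF 0 1) hGm2,
      ofReal_integral_eq_lintegral_ofReal hKint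
        (Filter.Eventually.of_forall fun u => mul_nonneg (stdNormalPDF_pos u).le (hGnn _))]
    refine lintegral_congr fun u => ?_
    rw [Pi.mul_apply, gaussianPDF, ← stdNormalPDF_eq,
      ← ENNReal.ofReal_mul (stdNormalPDF_pos u).le]
  -- Step E: unfold psi
  have habs : |t - s| = t - s := abs_of_pos hts
  have hpsi : psi s t (stdNormalCDF c) (stdNormalCDF (y / Real.sqrt t))
      = ∫ w in Ioc (0:ℝ) (stdNormalCDF c), G (Real.sqrt s * stdNormalCDFInv w) := by
    rw [psi, if_pos (show 0 < |t - s| by rw [habs]; exact hts),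
      intervalIntegral.integral_of_le (stdNormalCDF_pos c).le]
    refine setIntegral_congr_fun measurableSet_Ioc fun w _ => ?_
    rw [psiIntegrand, if_neg (not_le.mpr (stdNormalCDF_pos _)),
      if_neg (not_le.mpr (stdNormalCDF_lt_one _)),
      max_eq_right hst.le, min_eq_left hst.le, habs, stdNormalCDFInv_comp]
    show _ = stdNormalCDF ((y - Real.sqrt s * stdNormalCDFInv w) / Real.sqrt (t - s))
    rw [show Real.sqrt t * (y / Real.sqrt t) = y from by field_simp]
  -- Step F: change of variables w = Φ(u)
  have hCOV : ∫ w in Ioc (0:ℝ) (stdNormalCDF c), G (Real.sqrt s * stdNormalCDFInv w)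
      = ∫ u in Iic c, stdNormalPDF u * G (Real.sqrt s * u) := by
    rw [← stdNormalCDF_image_Iic c,
      integral_image_eq_integral_abs_deriv_smul measurableSet_Iic
        (fun u _ => (stdNormalCDF_hasDerivAt u).hasDerivWithinAt)
        stdNormalCDF_strictMono.injective.injOn _]
    refine setIntegral_congr_fun measurableSet_Iic fun u _ => ?_
    rw [stdNormalCDFInv_comp, smul_eq_mul, abs_of_nonneg (stdNormalPDF_pos u).le]
  rw [hPeq, hprod, hlin, hdens,
    ENNReal.toReal_ofReal (setIntegral_nonneg measurableSet_Iic fun u _ =>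
      mul_nonneg (stdNormalPDF_pos u).le (hGnn _)), hpsi, hCOV]
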